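/- Fix ε > 0 and real numbers α, β with 0 ≤ α ≤ β ≤ π/2. Then there is a constant K (depending on ε, α, β) such that for every integer n ≥ 1, | |C_{α,β}(n)| − ((sin β − cos β) − (sin α − cos α))·n | ≤ K·n^ε. -/

import Mathlib

open Real Set Filter

/-- The open interior of the box `B_{i,j}(n) = [i/n,(i+1)/n] × [j/n,(j+1)/n]`. -/
def boxInt (n : ℕ) (i j : ℤ) : Set (ℝ × ℝ) :=
  {p | (i : ℝ) / n < p.1 ∧ p.1 < ((i : ℝ) + 1) / n ∧
       (j : ℝ) / n < p.2 ∧ p.2 < ((j : ℝ) + 1) / n}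

/-- The plane unit circle `C`. -/
def unitCircle : Set (ℝ × ℝ) := {p | p.1 ^ 2 + p.2 ^ 2 = 1}

/-- The approximation `X(n)` of a set `X ⊆ ℝ²`: the boxes (encoded by their index
pairs `(i,j) ∈ ℤ²`) whose open interior intersects `X`. -/
def approx (n : ℕ) (X : Set (ℝ × ℝ)) : Set (ℤ × ℤ) :=
  {ij | (boxInt n ij.1 ij.2 ∩ X).Nonempty}

/-- The open arc `C_{α,β} = {(cos t, sin t) : α < t < β}` of the unit circle. -/
def arc (α β : ℝ) : Set (ℝ × ℝ) :=
  {p | ∃ t : ℝ, α < t ∧ t < β ∧ p = (Real.cos t, Real.sin t)}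


section NT

/-- Number of square roots of -1 in `ZMod r`. -/
noncomputable def sq1 (r : ℕ) : ℕ :=
  if h : r = 0 then 0 else
    haveI : NeZero r := ⟨h⟩
    (Finset.univ.filter (fun x : ZMod r => x^2 = -1)).card

lemma sq1_eq (r : ℕ) (h : r ≠ 0) :
    haveI : NeZero r := ⟨h⟩
    sq1 r = (Finset.univ.filter (fun x : ZMod r => x^2 = -1)).card := by
  simp [sq1, h]

lemma sq1_mul_le {m t : ℕ} (hm : m ≠ 0) (ht : t ≠ 0) (h : m.Coprime t) :
    sq1 (m * t) ≤ sq1 m * sq1 t := by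
  haveI : NeZero m := ⟨hm⟩
  haveI : NeZero t := ⟨ht⟩
  haveI : NeZero (m * t) := ⟨mul_ne_zero hm ht⟩
  rw [sq1_eq _ (mul_ne_zero hm ht), sq1_eq _ hm, sq1_eq _ ht]
  have φ := ZMod.chineseRemainder h
  rw [← Finset.card_product]
  apply Finset.card_le_card_of_injOn (fun x => φ x)
  · intro x hx
    simp only [Finset.mem_coe, Finset.mem_filter, Finset.mem_univ, true_and] at hx ⊢
    rw [Finset.mem_product]
    constructor
    · simp only [Finset.mem_filter, Finset.mem_univ, true_and]
      have : φ (x^2) = φ (-1) := by rw [hx]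
      rw [map_pow, map_neg, map_one] at this
      exact congrArg Prod.fst this
    · simp only [Finset.mem_filter, Finset.mem_univ, true_and]
      have : φ (x^2) = φ (-1) := by rw [hx]
      rw [map_pow, map_neg, map_one] at this
      exact congrArg Prod.snd this
  · intro a _ b _ hab
    exact φ.injective hab

lemma zmod_unit_of_not_dvd {p : ℕ} (hp : p.Prime) {k : ℕ} (hk : k ≠ 0)
    (u : ZMod (p ^ k)) (h : ¬ ((ZMod.castHom (dvd_pow_self p hk) (ZMod p)) u = 0)) :
    IsUnit u := by
  haveI : NeZero (p ^ k) := ⟨pow_ne_zero k hp.ne_zero⟩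
  have hval : ((u.val : ℕ) : ZMod (p ^ k)) = u := by
    rw [ZMod.natCast_val, ZMod.cast_id]
  rw [← hval, ZMod.isUnit_iff_coprime]
  apply Nat.Coprime.pow_right
  rw [Nat.coprime_comm, hp.coprime_iff_not_dvd]
  intro hdvd
  apply h
  have h2 : ((ZMod.castHom (dvd_pow_self p hk) (ZMod p)) u) = ((u.val : ℕ) : ZMod p) := by
    rw [← hval]; simp
  rw [h2]
  exact (ZMod.natCast_eq_zero_iff u.val p).mpr hdvd

lemma sq1_odd_prime_pow_le {p : ℕ} (hp : p.Prime) (hodd : p ≠ 2) {k : ℕ} (hk : k ≠ 0) :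
    haveI : NeZero (p ^ k) := ⟨pow_ne_zero k hp.ne_zero⟩
    (Finset.univ.filter (fun x : ZMod (p ^ k) => x^2 = -1)).card ≤ 2 := by
  haveI : NeZero (p ^ k) := ⟨pow_ne_zero k hp.ne_zero⟩
  haveI : Fact p.Prime := ⟨hp⟩
  set F := (Finset.univ.filter (fun x : ZMod (p ^ k) => x^2 = -1)) with hF
  rcases F.eq_empty_or_nonempty with he | ⟨z, hz⟩
  · simp [he]
  have hzsol : z ^ 2 = -1 := by
    have := hz; rw [hF, Finset.mem_filter] at this; exact this.2
  have hsub : F ⊆ insert z {-z} := by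
    intro y hy
    have hysol : y ^ 2 = -1 := by
      rw [hF, Finset.mem_filter] at hy; exact hy.2
    have hprod : (y - z) * (y + z) = 0 := by
      have : (y - z) * (y + z) = y^2 - z^2 := by ring
      rw [this, hysol, hzsol]; ring
    set ψ := ZMod.castHom (dvd_pow_self p hk) (ZMod p) with hψ
    have h2ne : (2 : ZMod p) ≠ 0 := by
      intro hc
      have hc' : ((2 : ℕ) : ZMod p) = 0 := by exact_mod_cast hc
      have : p ∣ 2 := (ZMod.natCast_eq_zero_iff 2 p).mp hc'
      exact hodd ((Nat.prime_dvd_prime_iff_eq hp Nat.prime_two).mp this)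
    have hkey : y = z ∨ y = -z := by
      by_cases h1 : ψ (y - z) = 0
      · by_cases h2 : ψ (y + z) = 0
        · exfalso
          have hsum : ψ ((y - z) + (y + z)) = 0 := by rw [map_add, h1, h2, add_zero]
          have h2y : ψ (2 * y) = 0 := by
            rw [show (2 : ZMod (p^k)) * y = (y - z) + (y + z) by ring]; exact hsum
          have hy0 : ψ y = 0 := by
            rw [map_mul] at h2y
            rcases mul_eq_zero.mp h2y with h | h
            · rw [map_ofNat] at h; exact absurd h h2ne
            · exact h
          have : ψ (y ^ 2) = ψ (-1) := by rw [hysol]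
          rw [map_pow, hy0, map_neg, map_one] at this
          simp only [zero_pow, ne_eq, OfNat.ofNat_ne_zero, not_false_eq_true] at this
          exact one_ne_zero (neg_eq_zero.mp this.symm)
        · have hu : IsUnit (y + z) := zmod_unit_of_not_dvd hp hk _ h2
          left
          have : y - z = 0 := (IsUnit.mul_left_eq_zero hu).mp hprod
          exact sub_eq_zero.mp this
      · have hu : IsUnit (y - z) := zmod_unit_of_not_dvd hp hk _ h1
        right
        have : y + z = 0 := (IsUnit.mul_right_eq_zero hu).mp hprod
        exact eq_neg_of_add_eq_zero_left this
    rcases hkey with h | h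
    · simp [h]
    · simp [h]
  calc F.card ≤ (insert z ({-z} : Finset (ZMod (p^k)))).card := Finset.card_le_card hsub
    _ ≤ 2 := le_trans (Finset.card_insert_le _ _) (by simp)

lemma sq1_two_pow_le {k : ℕ} (hk : k ≠ 0) :
    haveI : NeZero ((2:ℕ) ^ k) := ⟨pow_ne_zero k two_ne_zero⟩
    (Finset.univ.filter (fun x : ZMod (2 ^ k) => x^2 = -1)).card ≤ 2 := by
  haveI : NeZero ((2:ℕ) ^ k) := ⟨pow_ne_zero k two_ne_zero⟩
  rcases eq_or_lt_of_le (Nat.one_le_iff_ne_zero.mpr hk) with h1 | h2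
  · have : (2:ℕ) ^ k = 2 := by rw [← h1]; ring
    calc (Finset.univ.filter (fun x : ZMod (2 ^ k) => x^2 = -1)).card
        ≤ (Finset.univ : Finset (ZMod (2^k))).card := Finset.card_filter_le _ _
      _ = 2 := by rw [Finset.card_univ, ZMod.card, this]
  · have hdvd : (4:ℕ) ∣ 2 ^ k := by
      have : (4:ℕ) = 2 ^ 2 := by norm_num
      rw [this]; exact pow_dvd_pow 2 h2
    have : (Finset.univ.filter (fun x : ZMod (2 ^ k) => x^2 = -1)) = ∅ := by
      rw [Finset.filter_eq_empty_iff]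
      intro x _ hx
      have h4 : ∀ y : ZMod 4, y ^ 2 ≠ -1 := by decide
      set ψ := ZMod.castHom hdvd (ZMod 4)
      have : (ψ x) ^ 2 = -1 := by rw [← map_pow, hx, map_neg, map_one]
      exact h4 _ this
    simp [this]

lemma sq1_prime_pow_le' {p : ℕ} (hp : p.Prime) {k : ℕ} (hk : k ≠ 0) :
    sq1 (p ^ k) ≤ 2 := by
  haveI : NeZero (p ^ k) := ⟨pow_ne_zero k hp.ne_zero⟩
  rw [sq1_eq _ (pow_ne_zero k hp.ne_zero)]
  rcases eq_or_ne p 2 with h2 | h2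
  · subst h2; exact sq1_two_pow_le hk
  · exact sq1_odd_prime_pow_le hp h2 hk

/-- Number of square roots of `-1` in `ZMod r` is at most the number of divisors. -/
lemma sq1_le_card_divisors : ∀ r : ℕ, r ≠ 0 → sq1 r ≤ r.divisors.card := by
  intro r
  induction r using Nat.strong_induction_on with
  | _ r ih =>
    intro hr
    rcases eq_or_ne r 1 with h1 | h1
    · subst h1
      haveI : NeZero (1:ℕ) := ⟨one_ne_zero⟩
      rw [sq1_eq _ one_ne_zero]
      exact le_trans (Finset.card_filter_le _ _) (by simp)
    · -- r ≥ 2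
      set p := r.minFac with hpdef
      have hp : p.Prime := Nat.minFac_prime h1
      set k := r.factorization p with hkdef
      have hk : k ≠ 0 := Nat.pos_iff_ne_zero.mp (hp.factorization_pos_of_dvd hr (Nat.minFac_dvd r))
      set t := r / p ^ k with htdef
      have hrt : p ^ k * t = r := Nat.ordProj_mul_ordCompl_eq_self r p
      have ht : t ≠ 0 := Nat.pos_iff_ne_zero.mp (Nat.ordCompl_pos p hr)
      have hcop : (p ^ k).Coprime t := (Nat.coprime_ordCompl hp hr).pow_left _
      have htlt : t < r := by
        apply Nat.div_lt_self (Nat.pos_of_ne_zero hr)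
        exact Nat.one_lt_pow hk hp.one_lt
      have h1' : sq1 r ≤ sq1 (p ^ k) * sq1 t := by
        rw [← hrt]; exact sq1_mul_le (pow_ne_zero k hp.ne_zero) ht hcop
      have h2' : sq1 t ≤ t.divisors.card := ih t htlt ht
      have h3' : sq1 (p ^ k) ≤ 2 := sq1_prime_pow_le' hp hk
      have hdpk : (p ^ k).divisors.card = k + 1 := by
        rw [Nat.divisors_prime_pow hp]; simp
      calc sq1 r ≤ sq1 (p ^ k) * sq1 t := h1'
        _ ≤ 2 * t.divisors.card := Nat.mul_le_mul h3' h2'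
        _ ≤ (k + 1) * t.divisors.card := by
            apply Nat.mul_le_mul_right
            omega
        _ = (p ^ k).divisors.card * t.divisors.card := by rw [hdpk]
        _ = ((p ^ k) * t).divisors.card := (hcop.card_divisors_mul).symm
        _ = r.divisors.card := by rw [hrt]

lemma card_divisors_sq_le (n : ℕ) (hn : n ≠ 0) :
    (n^2).divisors.card ≤ n.divisors.card ^ 2 := by
  rw [Nat.card_divisors (pow_ne_zero 2 hn), Nat.card_divisors hn,
    Nat.primeFactors_pow n two_ne_zero, ← Finset.prod_pow]
  apply Finset.prod_le_prod'
  intro p _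
  rw [Nat.factorization_pow]
  simp only [Finsupp.smul_apply, smul_eq_mul]
  nlinarith [n.factorization p]

/-- Interior lattice points on the circle of radius n, per gcd class. -/
lemma card_gcd_class_le (n d : ℕ) (hn : n ≠ 0) (hd : d ∣ n) (hd0 : d ≠ 0) :
    ((Finset.range (n+1) ×ˢ Finset.range (n+1)).filter
      (fun ab => 1 ≤ ab.1 ∧ 1 ≤ ab.2 ∧ ab.1^2 + ab.2^2 = n^2 ∧ Nat.gcd ab.1 ab.2 = d)).card
      ≤ sq1 ((n/d)^2) := by
  set s := n / d with hsdef
  have hns : n = d * s := (Nat.mul_div_cancel' hd).symm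
  have hs0 : s ≠ 0 := by
    intro h; rw [h, mul_zero] at hns; exact hn hns
  have hs2 : (s^2 : ℕ) ≠ 0 := pow_ne_zero 2 hs0
  haveI : NeZero (s^2) := ⟨hs2⟩
  rw [sq1_eq _ hs2]
  -- facts about members
  have hfacts : ∀ ab : ℕ × ℕ, (1 ≤ ab.1 ∧ 1 ≤ ab.2 ∧ ab.1^2 + ab.2^2 = n^2 ∧ Nat.gcd ab.1 ab.2 = d) →
      ∃ a' b' : ℕ, ab.1 = d * a' ∧ ab.2 = d * b' ∧ Nat.Coprime a' b' ∧
        a'^2 + b'^2 = s^2 ∧ 1 ≤ a' ∧ 1 ≤ b' ∧ a' < s ∧ b' < s ∧ Nat.Coprime b' s := by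
    rintro ⟨a, b⟩ ⟨ha1, hb1, hab, hgcd⟩
    dsimp only at ha1 hb1 hab hgcd
    have hda : d ∣ a := hgcd ▸ Nat.gcd_dvd_left a b
    have hdb : d ∣ b := hgcd ▸ Nat.gcd_dvd_right a b
    obtain ⟨a', ha'⟩ := hda
    obtain ⟨b', hb'⟩ := hdb
    have hcop : Nat.Coprime a' b' := by
      have := Nat.coprime_div_gcd_div_gcd (m := a) (n := b) (by rw [hgcd]; omega)
      rw [hgcd] at this
      rwa [ha', hb', Nat.mul_div_cancel_left _ (Nat.pos_of_ne_zero hd0),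
        Nat.mul_div_cancel_left _ (Nat.pos_of_ne_zero hd0)] at this
    have hsum : a'^2 + b'^2 = s^2 := by
      have h2 : (d*a')^2 + (d*b')^2 = (d*s)^2 := by rw [← ha', ← hb', ← hns]; exact hab
      have h3 : d^2 * (a'^2 + b'^2) = d^2 * s^2 := by ring_nf; ring_nf at h2; linarith
      exact Nat.eq_of_mul_eq_mul_left (by positivity) h3
    have ha'1 : 1 ≤ a' := by
      rcases Nat.eq_zero_or_pos a' with h | h
      · exfalso; rw [h, mul_zero] at ha'; omega
      · exact h
    have hb'1 : 1 ≤ b' := by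
      rcases Nat.eq_zero_or_pos b' with h | h
      · exfalso; rw [h, mul_zero] at hb'; omega
      · exact h
    have ha's : a' < s := by
      have hb'2 : 1 ≤ b'^2 := Nat.one_le_pow 2 b' hb'1
      have h1 : a'^2 < s^2 := by omega
      exact lt_of_pow_lt_pow_left₀ 2 (Nat.zero_le s) h1
    have hb's : b' < s := by
      have ha'2 : 1 ≤ a'^2 := Nat.one_le_pow 2 a' ha'1
      have h1 : b'^2 < s^2 := by omega
      exact lt_of_pow_lt_pow_left₀ 2 (Nat.zero_le s) h1
    have hcops : Nat.Coprime b' s := by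
      by_contra hnc
      obtain ⟨q, hq, hqb, hqs⟩ := Nat.Prime.not_coprime_iff_dvd.mp hnc
      have h1 : q ∣ a'^2 := by
        have : a'^2 = s^2 - b'^2 := by omega
        rw [this]
        exact Nat.dvd_sub (Dvd.dvd.pow hqs two_ne_zero) (Dvd.dvd.pow hqb two_ne_zero)
      have h2 : q ∣ a' := hq.dvd_of_dvd_pow h1
      have : q ∣ Nat.gcd a' b' := Nat.dvd_gcd h2 hqb
      rw [hcop] at this
      exact hq.one_lt.ne' (Nat.dvd_one.mp this)
    exact ⟨a', b', ha', hb', hcop, hsum, ha'1, hb'1, ha's, hb's, hcops⟩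
  -- the injection
  classical
  apply Finset.card_le_card_of_injOn
    (fun ab => ((ab.1 / d : ℕ) : ZMod (s^2)) * ((ab.2 / d : ℕ) : ZMod (s^2))⁻¹)
  · rintro ⟨a, b⟩ hab
    rw [Finset.mem_coe, Finset.mem_filter] at hab
    obtain ⟨a', b', ha', hb', hcop, hsum, ha'1, hb'1, ha's, hb's, hcops⟩ := hfacts _ hab.2
    dsimp only at ha' hb'
    have had : a / d = a' := by rw [ha', Nat.mul_div_cancel_left _ (Nat.pos_of_ne_zero hd0)]
    have hbd : b / d = b' := by rw [hb', Nat.mul_div_cancel_left _ (Nat.pos_of_ne_zero hd0)]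
    rw [Finset.mem_coe, Finset.mem_filter]
    refine ⟨Finset.mem_univ _, ?_⟩
    simp only [had, hbd]
    have hbu : IsUnit ((b' : ℕ) : ZMod (s^2)) :=
      (ZMod.isUnit_iff_coprime b' (s^2)).mpr (hcops.pow_right 2)
    have hbb : ((b' : ℕ) : ZMod (s^2)) * ((b' : ℕ) : ZMod (s^2))⁻¹ = 1 :=
      ZMod.mul_inv_of_unit _ hbu
    have hcast : ((a' : ℕ) : ZMod (s^2))^2 = -(((b' : ℕ) : ZMod (s^2))^2) := by
      have h0 : ((a'^2 + b'^2 : ℕ) : ZMod (s^2)) = 0 := by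
        rw [hsum]; exact_mod_cast ZMod.natCast_self (s^2)
      push_cast at h0
      linear_combination h0
    calc (((a' : ℕ) : ZMod (s^2)) * ((b' : ℕ) : ZMod (s^2))⁻¹)^2
        = ((a' : ℕ) : ZMod (s^2))^2 * (((b' : ℕ) : ZMod (s^2))⁻¹)^2 := by ring
      _ = -((((b' : ℕ) : ZMod (s^2)) * ((b' : ℕ) : ZMod (s^2))⁻¹)^2) := by
          rw [hcast]; ring
      _ = -1 := by rw [hbb]; norm_num
  · rintro ⟨a₁, b₁⟩ h₁ ⟨a₂, b₂⟩ h₂ heq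
    simp only [Finset.coe_filter, Set.mem_setOf_eq] at h₁ h₂
    obtain ⟨a₁', b₁', ha₁', hb₁', hcop₁, hsum₁, ha₁1, hb₁1, ha₁s, hb₁s, hcops₁⟩ := hfacts (a₁,b₁) h₁.2
    obtain ⟨a₂', b₂', ha₂', hb₂', hcop₂, hsum₂, ha₂1, hb₂1, ha₂s, hb₂s, hcops₂⟩ := hfacts (a₂,b₂) h₂.2
    dsimp only at ha₁' hb₁' ha₂' hb₂' heq
    have had₁ : a₁ / d = a₁' := by rw [ha₁', Nat.mul_div_cancel_left _ (Nat.pos_of_ne_zero hd0)]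
    have hbd₁ : b₁ / d = b₁' := by rw [hb₁', Nat.mul_div_cancel_left _ (Nat.pos_of_ne_zero hd0)]
    have had₂ : a₂ / d = a₂' := by rw [ha₂', Nat.mul_div_cancel_left _ (Nat.pos_of_ne_zero hd0)]
    have hbd₂ : b₂ / d = b₂' := by rw [hb₂', Nat.mul_div_cancel_left _ (Nat.pos_of_ne_zero hd0)]
    simp only [had₁, hbd₁, had₂, hbd₂] at heq
    have hbu₁ : IsUnit ((b₁' : ℕ) : ZMod (s^2)) :=
      (ZMod.isUnit_iff_coprime b₁' (s^2)).mpr (hcops₁.pow_right 2)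
    have hbu₂ : IsUnit ((b₂' : ℕ) : ZMod (s^2)) :=
      (ZMod.isUnit_iff_coprime b₂' (s^2)).mpr (hcops₂.pow_right 2)
    have hbb₁ : ((b₁' : ℕ) : ZMod (s^2)) * ((b₁' : ℕ) : ZMod (s^2))⁻¹ = 1 :=
      ZMod.mul_inv_of_unit _ hbu₁
    have hbb₂ : ((b₂' : ℕ) : ZMod (s^2)) * ((b₂' : ℕ) : ZMod (s^2))⁻¹ = 1 :=
      ZMod.mul_inv_of_unit _ hbu₂
    have hkey : ((a₁' * b₂' : ℕ) : ZMod (s^2)) = ((a₂' * b₁' : ℕ) : ZMod (s^2)) := by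
      push_cast
      calc ((a₁' : ℕ) : ZMod (s^2)) * ((b₂' : ℕ) : ZMod (s^2))
          = (((a₁' : ℕ) : ZMod (s^2)) * ((b₁' : ℕ) : ZMod (s^2))⁻¹)
            * (((b₁' : ℕ) : ZMod (s^2)) * ((b₂' : ℕ) : ZMod (s^2))) := by
            rw [show (((a₁':ℕ) : ZMod (s^2)) * ((b₁':ℕ) : ZMod (s^2))⁻¹)
              * (((b₁':ℕ) : ZMod (s^2)) * ((b₂':ℕ) : ZMod (s^2)))
              = ((a₁':ℕ) : ZMod (s^2)) * ((b₂':ℕ) : ZMod (s^2))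
                 * (((b₁':ℕ) : ZMod (s^2)) * ((b₁':ℕ) : ZMod (s^2))⁻¹) by ring, hbb₁, mul_one]
        _ = (((a₂' : ℕ) : ZMod (s^2)) * ((b₂' : ℕ) : ZMod (s^2))⁻¹)
            * (((b₁' : ℕ) : ZMod (s^2)) * ((b₂' : ℕ) : ZMod (s^2))) := by rw [heq]
        _ = ((a₂' : ℕ) : ZMod (s^2)) * ((b₁' : ℕ) : ZMod (s^2)) := by
            rw [show (((a₂':ℕ) : ZMod (s^2)) * ((b₂':ℕ) : ZMod (s^2))⁻¹)
              * (((b₁':ℕ) : ZMod (s^2)) * ((b₂':ℕ) : ZMod (s^2)))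
              = ((a₂':ℕ) : ZMod (s^2)) * ((b₁':ℕ) : ZMod (s^2))
                 * (((b₂':ℕ) : ZMod (s^2)) * ((b₂':ℕ) : ZMod (s^2))⁻¹) by ring, hbb₂, mul_one]
    have hnat : a₁' * b₂' = a₂' * b₁' := by
      have hmod : a₁' * b₂' ≡ a₂' * b₁' [MOD s^2] :=
        (ZMod.natCast_eq_natCast_iff _ _ _).mp hkey
      have hlt₁ : a₁' * b₂' < s^2 := by
        calc a₁' * b₂' < s * s := Nat.mul_lt_mul_of_lt_of_lt ha₁s hb₂s
          _ = s^2 := (sq s).symm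
      have hlt₂ : a₂' * b₁' < s^2 := by
        calc a₂' * b₁' < s * s := Nat.mul_lt_mul_of_lt_of_lt ha₂s hb₁s
          _ = s^2 := (sq s).symm
      exact hmod.eq_of_lt_of_lt hlt₁ hlt₂
    have ha : a₁' = a₂' := by
      apply Nat.dvd_antisymm
      · exact (Nat.Coprime.dvd_of_dvd_mul_right hcop₁ ⟨b₂', by linarith [hnat]⟩)
      · exact (Nat.Coprime.dvd_of_dvd_mul_right hcop₂ ⟨b₁', by linarith [hnat]⟩)
    have hb : b₁' = b₂' := by
      have := hnat
      rw [ha] at this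
      exact (Nat.eq_of_mul_eq_mul_left (by omega) this.symm)
    have : a₁ = a₂ := by rw [ha₁', ha₂', ha]
    have hb2 : b₁ = b₂ := by rw [hb₁', hb₂', hb]
    exact Prod.ext this hb2

lemma circle_lattice_le (n : ℕ) (hn : n ≠ 0) :
    ((Finset.range (n+1) ×ˢ Finset.range (n+1)).filter
      (fun ab => ab.1^2 + ab.2^2 = n^2)).card ≤ 2 + n.divisors.card ^ 3 := by
  classical
  set R := Finset.range (n+1) ×ˢ Finset.range (n+1) with hR
  set Fint := R.filter (fun ab => 1 ≤ ab.1 ∧ 1 ≤ ab.2 ∧ ab.1^2 + ab.2^2 = n^2) with hFint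
  have hsub1 : R.filter (fun ab => ab.1^2 + ab.2^2 = n^2) ⊆
      insert ((0:ℕ),n) (insert (n,(0:ℕ)) Fint) := by
    intro ab hab
    rw [Finset.mem_filter] at hab
    obtain ⟨hmem, heq⟩ := hab
    rcases Nat.eq_zero_or_pos ab.1 with h1 | h1
    · have : ab.2 ^ 2 = n ^ 2 := by rw [h1] at heq; simpa using heq
      have h2 : ab.2 = n := Nat.pow_left_injective (by norm_num) this
      have : ab = (0, n) := Prod.ext h1 h2
      simp [this]
    rcases Nat.eq_zero_or_pos ab.2 with h2 | h2
    · have : ab.1 ^ 2 = n ^ 2 := by rw [h2] at heq; simpa using heq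
      have h1' : ab.1 = n := Nat.pow_left_injective (by norm_num) this
      have : ab = (n, 0) := Prod.ext h1' h2
      simp [this]
    · apply Finset.mem_insert_of_mem
      apply Finset.mem_insert_of_mem
      rw [hFint, Finset.mem_filter]
      exact ⟨hmem, h1, h2, heq⟩
  have hstep1 : (R.filter (fun ab => ab.1^2 + ab.2^2 = n^2)).card ≤ 2 + Fint.card := by
    calc (R.filter (fun ab => ab.1^2 + ab.2^2 = n^2)).card
        ≤ (insert ((0:ℕ),n) (insert (n,(0:ℕ)) Fint)).card := Finset.card_le_card hsub1
      _ ≤ 1 + (insert (n,(0:ℕ)) Fint).card := by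
          apply le_trans (Finset.card_insert_le _ _); omega
      _ ≤ 1 + (1 + Fint.card) := by
          have := Finset.card_insert_le (n,(0:ℕ)) Fint; omega
      _ = 2 + Fint.card := by omega
  have hsub2 : Fint ⊆ n.divisors.biUnion (fun d => R.filter
      (fun ab => 1 ≤ ab.1 ∧ 1 ≤ ab.2 ∧ ab.1^2 + ab.2^2 = n^2 ∧ Nat.gcd ab.1 ab.2 = d)) := by
    intro ab hab
    rw [hFint, Finset.mem_filter] at hab
    obtain ⟨hmem, h1, h2, heq⟩ := hab
    rw [Finset.mem_biUnion]
    refine ⟨Nat.gcd ab.1 ab.2, ?_, ?_⟩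
    · rw [Nat.mem_divisors]
      constructor
      · have hd2 : (Nat.gcd ab.1 ab.2)^2 ∣ n^2 := by
          rw [← heq]
          exact dvd_add (pow_dvd_pow_of_dvd (Nat.gcd_dvd_left _ _) 2)
            (pow_dvd_pow_of_dvd (Nat.gcd_dvd_right _ _) 2)
        exact (Nat.pow_dvd_pow_iff two_ne_zero).mp hd2
      · exact hn
    · rw [Finset.mem_filter]
      exact ⟨hmem, h1, h2, heq, rfl⟩
  have hstep2 : Fint.card ≤ n.divisors.card * n.divisors.card ^ 2 := by
    calc Fint.card ≤ (n.divisors.biUnion (fun d => R.filter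
        (fun ab => 1 ≤ ab.1 ∧ 1 ≤ ab.2 ∧ ab.1^2 + ab.2^2 = n^2 ∧ Nat.gcd ab.1 ab.2 = d))).card :=
          Finset.card_le_card hsub2
      _ ≤ ∑ d ∈ n.divisors, (R.filter
        (fun ab => 1 ≤ ab.1 ∧ 1 ≤ ab.2 ∧ ab.1^2 + ab.2^2 = n^2 ∧ Nat.gcd ab.1 ab.2 = d)).card :=
          Finset.card_biUnion_le
      _ ≤ ∑ d ∈ n.divisors, n.divisors.card ^ 2 := by
          apply Finset.sum_le_sum
          intro d hd
          rw [Nat.mem_divisors] at hd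
          have hd0 : d ≠ 0 := by
            intro h; rw [h] at hd; exact hn (Nat.eq_zero_of_zero_dvd hd.1)
          have hnd : n / d ≠ 0 := by
            have := Nat.div_pos (Nat.le_of_dvd (Nat.pos_of_ne_zero hn) hd.1) (Nat.pos_of_ne_zero hd0)
            omega
          calc (R.filter _).card ≤ sq1 ((n/d)^2) := card_gcd_class_le n d hn hd.1 hd0
            _ ≤ ((n/d)^2).divisors.card :=
                sq1_le_card_divisors _ (pow_ne_zero 2 hnd)
            _ ≤ (n^2).divisors.card := by
                apply Finset.card_le_card
                apply Nat.divisors_subset_of_dvd (pow_ne_zero 2 hn)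
                exact pow_dvd_pow_of_dvd (Nat.div_dvd_of_dvd hd.1) 2
            _ ≤ n.divisors.card ^ 2 := card_divisors_sq_le n hn
      _ = n.divisors.card * n.divisors.card ^ 2 := by rw [Finset.sum_const, smul_eq_mul]
  calc (R.filter (fun ab => ab.1^2 + ab.2^2 = n^2)).card ≤ 2 + Fint.card := hstep1
    _ ≤ 2 + n.divisors.card * n.divisors.card ^ 2 := by omega
    _ = 2 + n.divisors.card ^ 3 := by ring_nf


lemma card_divisors_le_rpow (δ : ℝ) (hδ : 0 < δ) :
    ∃ K : ℝ, 1 ≤ K ∧ ∀ n : ℕ, n ≠ 0 → ((n.divisors.card : ℝ)) ≤ K * (n : ℝ) ^ δ := by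
  set c : ℝ := (2:ℝ) ^ δ - 1 with hcdef
  have h2δ : (1:ℝ) < (2:ℝ) ^ δ := by
    rw [show (1:ℝ) = (2:ℝ) ^ (0:ℝ) by simp]
    exact Real.rpow_lt_rpow_left_iff (by norm_num) |>.mpr hδ
  have hc : 0 < c := by simp [hcdef]; linarith
  set C₀ : ℝ := max 1 (2 / c) with hC₀def
  have hC₀ : 1 ≤ C₀ := le_max_left _ _
  set T : ℕ := ⌈(2:ℝ) ^ (1/δ)⌉₊ with hTdef
  refine ⟨C₀ ^ (T + 1), one_le_pow₀ hC₀, ?_⟩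
  intro n hn
  have hkey : ∀ p ∈ n.primeFactors,
      ((n.factorization p + 1 : ℕ) : ℝ) ≤
        (if p ≤ T then C₀ else 1) * (((p:ℝ) ^ (n.factorization p)) ^ δ) := by
    intro p hp
    have hpp : p.Prime := Nat.prime_of_mem_primeFactors hp
    set e : ℕ := n.factorization p with hedef
    have he : 1 ≤ e := by
      have := Nat.pos_of_mem_primeFactors hp  -- p > 0, not what we want
      have h2 : n.factorization p ≠ 0 := by
        rw [← Finsupp.mem_support_iff, Nat.support_factorization]; exact hp
      omega
    have hp2 : (2:ℝ) ≤ (p:ℝ) := by exact_mod_cast hpp.two_le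
    have hppos : (0:ℝ) < (p:ℝ) := by linarith
    have hpow_eq : (((p:ℝ) ^ e) ^ δ) = ((p:ℝ) ^ δ) ^ e := by
      rw [← Real.rpow_natCast (p:ℝ) e, ← Real.rpow_mul (le_of_lt hppos),
        mul_comm, Real.rpow_mul (le_of_lt hppos), Real.rpow_natCast]
    have h2pδ : (2:ℝ) ^ δ ≤ (p:ℝ) ^ δ :=
      Real.rpow_le_rpow (by norm_num) hp2 (le_of_lt hδ)
    by_cases hsmall : p ≤ T
    · rw [if_pos hsmall, hpow_eq]
      have hbern : 1 + (e:ℝ) * c ≤ (1 + c) ^ e := one_add_mul_le_pow (by linarith) e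
      have h1pc : (1:ℝ) + c = (2:ℝ) ^ δ := by simp [hcdef]
      calc ((e + 1 : ℕ) : ℝ) = (e:ℝ) + 1 := by push_cast; ring
        _ ≤ 2 * (e:ℝ) := by
            have : (1:ℝ) ≤ (e:ℝ) := by exact_mod_cast he
            linarith
        _ = (2 / c) * ((e:ℝ) * c) := by field_simp
        _ ≤ C₀ * (1 + (e:ℝ) * c) := by
            apply mul_le_mul (le_max_right _ _) (by linarith) ?_ (by linarith)
            positivity
        _ ≤ C₀ * (1 + c) ^ e := by
            apply mul_le_mul_of_nonneg_left hbern (by linarith)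
        _ = C₀ * ((2:ℝ) ^ δ) ^ e := by rw [h1pc]
        _ ≤ C₀ * ((p:ℝ) ^ δ) ^ e := by
            apply mul_le_mul_of_nonneg_left ?_ (by linarith)
            exact pow_le_pow_left₀ (by positivity) h2pδ e
    · rw [if_neg hsmall, one_mul, hpow_eq]
      have hTp : ((2:ℝ) ^ (1/δ)) ≤ (p:ℝ) := by
        calc ((2:ℝ) ^ (1/δ)) ≤ (T:ℝ) := Nat.le_ceil _
          _ ≤ (p:ℝ) := by exact_mod_cast (le_of_not_ge hsmall)
      have h2p : (2:ℝ) ≤ (p:ℝ) ^ δ := by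
        have := Real.rpow_le_rpow (by positivity) hTp (le_of_lt hδ)
        rwa [← Real.rpow_mul (by norm_num), one_div, inv_mul_cancel₀ (ne_of_gt hδ),
          Real.rpow_one] at this
      calc ((e + 1 : ℕ) : ℝ) = 1 + (e:ℝ) * 1 := by push_cast; ring
        _ ≤ (1 + 1) ^ e := one_add_mul_le_pow (by norm_num) e
        _ = (2:ℝ) ^ e := by norm_num
        _ ≤ ((p:ℝ) ^ δ) ^ e := pow_le_pow_left₀ (by norm_num) h2p e
  -- assemble the product
  have hprod := Finset.prod_le_prod (s := n.primeFactors)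
    (f := fun p => ((n.factorization p + 1 : ℕ) : ℝ))
    (g := fun p => (if p ≤ T then C₀ else 1) * (((p:ℝ) ^ (n.factorization p)) ^ δ))
    (fun p _ => by positivity) hkey
  have hd : ((n.divisors.card : ℕ) : ℝ) = ∏ p ∈ n.primeFactors, ((n.factorization p + 1 : ℕ) : ℝ) := by
    rw [Nat.card_divisors hn]; push_cast; ring
  have hsplit : ∏ p ∈ n.primeFactors, ((if p ≤ T then C₀ else 1) * (((p:ℝ) ^ (n.factorization p)) ^ δ))
      = (∏ p ∈ n.primeFactors, (if p ≤ T then C₀ else 1))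
        * ∏ p ∈ n.primeFactors, (((p:ℝ) ^ (n.factorization p)) ^ δ) := Finset.prod_mul_distrib
  have hn_eq : ∏ p ∈ n.primeFactors, ((p:ℝ) ^ (n.factorization p)) = (n:ℝ) := by
    have := Nat.factorization_prod_pow_eq_self hn
    rw [Finsupp.prod] at this
    rw [Nat.support_factorization] at this
    exact_mod_cast congrArg (Nat.cast : ℕ → ℝ) this
  have hrpow : ∏ p ∈ n.primeFactors, (((p:ℝ) ^ (n.factorization p)) ^ δ) = (n:ℝ) ^ δ := by
    rw [Real.finset_prod_rpow _ _ (fun p _ => by positivity), hn_eq]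
  have hif : ∏ p ∈ n.primeFactors, (if p ≤ T then C₀ else 1) ≤ C₀ ^ (T + 1) := by
    rw [Finset.prod_ite, Finset.prod_const, Finset.prod_const, one_pow, mul_one]
    have hcard : (n.primeFactors.filter (· ≤ T)).card ≤ T + 1 := by
      calc (n.primeFactors.filter (· ≤ T)).card ≤ (Finset.range (T+1)).card := by
            apply Finset.card_le_card
            intro p hp
            rw [Finset.mem_filter] at hp
            rw [Finset.mem_range]
            omega
        _ = T + 1 := Finset.card_range _
    exact pow_le_pow_right₀ hC₀ hcard
  calc ((n.divisors.card : ℕ) : ℝ) ≤ (∏ p ∈ n.primeFactors, (if p ≤ T then C₀ else 1))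
        * (n:ℝ) ^ δ := by rw [hd]; rw [hsplit, hrpow] at hprod; exact hprod
    _ ≤ C₀ ^ (T + 1) * (n:ℝ) ^ δ := by
        apply mul_le_mul_of_nonneg_right hif (by positivity)

end NT

lemma mem_approx_iff {n : ℕ} (hn : 0 < n) {α β : ℝ} (i j : ℤ) :
    (i, j) ∈ approx n (arc α β) ↔
    ∃ t, α < t ∧ t < β ∧ (i:ℝ) < Real.cos t * n ∧ Real.cos t * n < (i:ℝ) + 1 ∧
      (j:ℝ) < Real.sin t * n ∧ Real.sin t * n < (j:ℝ) + 1 := by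
  have hN : (0:ℝ) < n := by exact_mod_cast hn
  constructor
  · rintro ⟨p, hbox, t, ht1, ht2, rfl⟩
    obtain ⟨h1, h2, h3, h4⟩ := hbox
    exact ⟨t, ht1, ht2, (div_lt_iff₀ hN).mp h1, (lt_div_iff₀ hN).mp h2,
      (div_lt_iff₀ hN).mp h3, (lt_div_iff₀ hN).mp h4⟩
  · rintro ⟨t, ht1, ht2, h1, h2, h3, h4⟩
    exact ⟨(Real.cos t, Real.sin t),
      ⟨(div_lt_iff₀ hN).mpr h1, (lt_div_iff₀ hN).mpr h2,
        (div_lt_iff₀ hN).mpr h3, (lt_div_iff₀ hN).mpr h4⟩, ⟨t, ht1, ht2, rfl⟩⟩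

section geom
variable {n : ℕ} {α β : ℝ}

lemma trig_bounds (h0 : 0 ≤ α) (hβ : β ≤ Real.pi / 2) {t : ℝ} (ht1 : α < t) (ht2 : t < β) :
    0 ≤ Real.cos t ∧ Real.cos t ≤ 1 ∧ 0 ≤ Real.sin t ∧ Real.sin t ≤ 1 := by
  have hpi := Real.pi_pos
  refine ⟨Real.cos_nonneg_of_mem_Icc ⟨by linarith, by linarith⟩, Real.cos_le_one t,
    Real.sin_nonneg_of_nonneg_of_le_pi (by linarith) (by linarith), Real.sin_le_one t⟩

lemma trig_mono (h0 : 0 ≤ α) (hβ : β ≤ Real.pi / 2) {t₁ t₂ : ℝ}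
    (h1 : α ≤ t₁) (h12 : t₁ ≤ t₂) (h2 : t₂ ≤ β) :
    Real.cos t₂ ≤ Real.cos t₁ ∧ Real.sin t₁ ≤ Real.sin t₂ := by
  have hpi := Real.pi_pos
  constructor
  · exact Real.cos_le_cos_of_nonneg_of_le_pi (by linarith) (by linarith) h12
  · apply Real.strictMonoOn_sin.monotoneOn ⟨by linarith, by linarith⟩ ⟨by linarith, by linarith⟩ h12

lemma approx_inj (hn : 0 < n) (h0 : 0 ≤ α) (hβ : β ≤ Real.pi / 2) :
    Set.InjOn (fun ij : ℤ × ℤ => ij.2 - ij.1) (approx n (arc α β)) := by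
  have hN : (0:ℝ) ≤ (n:ℝ) := by positivity
  have core : ∀ (i₁ j₁ i₂ j₂ : ℤ) (t₁ t₂ : ℝ),
      (α < t₁ ∧ t₁ < β ∧ (i₁:ℝ) < Real.cos t₁ * n ∧ Real.cos t₁ * n < (i₁:ℝ) + 1 ∧
        (j₁:ℝ) < Real.sin t₁ * n ∧ Real.sin t₁ * n < (j₁:ℝ) + 1) →
      (α < t₂ ∧ t₂ < β ∧ (i₂:ℝ) < Real.cos t₂ * n ∧ Real.cos t₂ * n < (i₂:ℝ) + 1 ∧
        (j₂:ℝ) < Real.sin t₂ * n ∧ Real.sin t₂ * n < (j₂:ℝ) + 1) →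
      t₁ ≤ t₂ → j₁ - i₁ = j₂ - i₂ → (i₁, j₁) = (i₂, j₂) := by
    rintro i₁ j₁ i₂ j₂ t₁ t₂ ⟨ha₁, hb₁, hc₁, hd₁, he₁, hf₁⟩ ⟨ha₂, hb₂, hc₂, hd₂, he₂, hf₂⟩ h12 heq
    obtain ⟨hcos, hsin⟩ := trig_mono h0 hβ (le_of_lt ha₁) h12 (le_of_lt hb₂)
    have hi : i₂ ≤ i₁ := by
      have : (i₂:ℝ) < (i₁:ℝ) + 1 := by
        calc (i₂:ℝ) < Real.cos t₂ * n := hc₂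
          _ ≤ Real.cos t₁ * n := mul_le_mul_of_nonneg_right hcos hN
          _ < (i₁:ℝ) + 1 := hd₁
      have : (i₂:ℝ) < ((i₁ + 1 : ℤ):ℝ) := by push_cast; linarith
      have := (@Int.cast_lt ℝ _ _ _).mp this
      omega
    have hj : j₁ ≤ j₂ := by
      have : (j₁:ℝ) < ((j₂ + 1 : ℤ):ℝ) := by
        push_cast
        calc (j₁:ℝ) < Real.sin t₁ * n := he₁
          _ ≤ Real.sin t₂ * n := mul_le_mul_of_nonneg_right hsin hN
          _ < (j₂:ℝ) + 1 := hf₂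
      have := (@Int.cast_lt ℝ _ _ _).mp this
      omega
    have : i₁ = i₂ ∧ j₁ = j₂ := by omega
    simp [this.1, this.2]
  rintro ⟨i₁, j₁⟩ hp ⟨i₂, j₂⟩ hq heq
  rw [mem_approx_iff hn] at hp hq
  obtain ⟨t₁, h₁⟩ := hp
  obtain ⟨t₂, h₂⟩ := hq
  simp only at heq
  rcases le_total t₁ t₂ with h | h
  · exact core i₁ j₁ i₂ j₂ t₁ t₂ h₁ h₂ h heq
  · exact (core i₂ j₂ i₁ j₁ t₂ t₁ h₂ h₁ h heq.symm).symm

end geom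

section geom
variable {n : ℕ} {α β : ℝ}
lemma int_lt_of_real {a b : ℤ} (h : (a:ℝ) < (b:ℝ)) : a < b := (@Int.cast_lt ℝ _ _ _).mp h

lemma approx_subset_box (hn : 0 < n) (h0 : 0 ≤ α) (hβ : β ≤ Real.pi / 2) :
    approx n (arc α β) ⊆ ↑(Finset.Icc ((0:ℤ),(0:ℤ)) ((n:ℤ),(n:ℤ))) := by
  rintro ⟨i, j⟩ hij
  rw [mem_approx_iff hn] at hij
  obtain ⟨t, ht1, ht2, h1, h2, h3, h4⟩ := hij
  obtain ⟨hc0, hc1, hs0, hs1⟩ := trig_bounds h0 hβ ht1 ht2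
  have hN : (0:ℝ) ≤ (n:ℝ) := by positivity
  simp only [Finset.coe_Icc, Set.mem_Icc, Prod.mk_le_mk]
  have hi0 : (0:ℤ) ≤ i := by
    have : ((-1:ℤ):ℝ) < (i:ℝ) := by push_cast; nlinarith
    have := int_lt_of_real this; omega
  have hin : i ≤ (n:ℤ) := by
    have : (i:ℝ) < ((n:ℤ):ℝ) := by push_cast; nlinarith
    have := int_lt_of_real this; omega
  have hj0 : (0:ℤ) ≤ j := by
    have : ((-1:ℤ):ℝ) < (j:ℝ) := by push_cast; nlinarith
    have := int_lt_of_real this; omega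
  have hjn : j ≤ (n:ℤ) := by
    have : (j:ℝ) < ((n:ℤ):ℝ) := by push_cast; nlinarith
    have := int_lt_of_real this; omega
  exact ⟨⟨hi0, hj0⟩, ⟨hin, hjn⟩⟩

lemma approx_finite (hn : 0 < n) (h0 : 0 ≤ α) (hβ : β ≤ Real.pi / 2) :
    (approx n (arc α β)).Finite :=
  Set.Finite.subset (Finset.finite_toSet _) (approx_subset_box hn h0 hβ)

/-- Main geometric estimate. -/
lemma approx_card_est (hn : 0 < n) (h0 : 0 ≤ α) (hαβ : α ≤ β) (hβ : β ≤ Real.pi / 2) :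
    |((approx n (arc α β)).ncard : ℝ)
      - ((Real.sin β - Real.cos β) - (Real.sin α - Real.cos α)) * n|
      ≤ 3 + (({ab : ℤ × ℤ | 0 ≤ ab.1 ∧ 0 ≤ ab.2 ∧ ab.1^2 + ab.2^2 = (n:ℤ)^2}.ncard : ℝ)) := by
  classical
  have hN : (0:ℝ) < (n:ℝ) := by exact_mod_cast hn
  set S := approx n (arc α β) with hS
  set A : ℝ := Real.sin α * n - Real.cos α * n with hA
  set B : ℝ := Real.sin β * n - Real.cos β * n with hB
  have htarget : ((Real.sin β - Real.cos β) - (Real.sin α - Real.cos α)) * n = B - A := by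
    rw [hA, hB]; ring
  have hAB : A ≤ B := by
    obtain ⟨hc, hs⟩ := trig_mono (α := α) (β := β) h0 hβ le_rfl hαβ le_rfl
    rw [hA, hB]
    have := mul_le_mul_of_nonneg_right hs (le_of_lt hN)
    have := mul_le_mul_of_nonneg_right hc (le_of_lt hN)
    linarith
  have hfin : S.Finite := approx_finite hn h0 hβ
  set CZ : Set (ℤ × ℤ) := {ab : ℤ × ℤ | 0 ≤ ab.1 ∧ 0 ≤ ab.2 ∧ ab.1^2 + ab.2^2 = (n:ℤ)^2}
    with hCZ
  have hCZfin : CZ.Finite := by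
    apply Set.Finite.subset (Finset.finite_toSet (Finset.Icc ((0:ℤ),(0:ℤ)) ((n:ℤ),(n:ℤ))))
    rintro ⟨a, b⟩ ⟨ha, hb, hab⟩
    simp only [Finset.coe_Icc, Set.mem_Icc, Prod.mk_le_mk]
    refine ⟨⟨ha, hb⟩, ?_, ?_⟩
    · nlinarith
    · nlinarith
  set E : Set ℤ := (fun ab : ℤ × ℤ => ab.2 - ab.1) '' CZ with hE
  have hEfin : E.Finite := hCZfin.image _
  -- Upper bound
  have hmaps : ∀ p ∈ S, (fun ij : ℤ × ℤ => ij.2 - ij.1) p ∈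
      ↑(Finset.Icc (⌈A⌉ - 1) (⌊B⌋ + 1)) := by
    rintro ⟨i, j⟩ hp
    rw [hS, mem_approx_iff hn] at hp
    obtain ⟨t, ht1, ht2, h1, h2, h3, h4⟩ := hp
    obtain ⟨hc, hs⟩ := trig_mono h0 hβ (le_of_lt ht1) (le_of_lt ht2) le_rfl
    obtain ⟨hc', hs'⟩ := trig_mono h0 hβ le_rfl (le_of_lt ht1) (le_of_lt ht2)
    have hub : ((j - i : ℤ):ℝ) < B + 1 := by
      push_cast
      rw [hB]
      nlinarith [mul_le_mul_of_nonneg_right hs (le_of_lt hN),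
        mul_le_mul_of_nonneg_right hc (le_of_lt hN)]
    have hlb : A - 1 < ((j - i : ℤ):ℝ) := by
      push_cast
      rw [hA]
      nlinarith [mul_le_mul_of_nonneg_right hs' (le_of_lt hN),
        mul_le_mul_of_nonneg_right hc' (le_of_lt hN)]
    refine Finset.mem_coe.mpr (Finset.mem_Icc.mpr ⟨?_, ?_⟩)
    · have : ⌈A - 1⌉ ≤ j - i := Int.ceil_le.mpr (le_of_lt hlb)
      rw [Int.ceil_sub_one] at this
      exact this
    · have : j - i ≤ ⌊B + 1⌋ := Int.le_floor.mpr (le_of_lt hub)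
      rw [Int.floor_add_one] at this
      exact this
  have hupper : (S.ncard : ℝ) ≤ B - A + 3 := by
    have hcard : S.ncard ≤ (Finset.Icc (⌈A⌉ - 1) (⌊B⌋ + 1)).card := by
      have := Set.ncard_le_ncard_of_injOn
        (t := (↑(Finset.Icc (⌈A⌉ - 1) (⌊B⌋ + 1)) : Set ℤ)) (fun ij : ℤ × ℤ => ij.2 - ij.1)
        hmaps (approx_inj hn h0 hβ) (Finset.finite_toSet _)
      rwa [Set.ncard_coe_finset] at this
    have h2 : ((Finset.Icc (⌈A⌉ - 1) (⌊B⌋ + 1)).card : ℝ) ≤ B - A + 3 := by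
      rw [Int.card_Icc]
      rcases le_or_gt ((⌊B⌋ + 1) + 1 - (⌈A⌉ - 1)) 0 with h | h
      · rw [Int.toNat_of_nonpos h]
        push_cast
        linarith
      · have heq : (((⌊B⌋ + 1) + 1 - (⌈A⌉ - 1)).toNat : ℤ) = (⌊B⌋ + 1) + 1 - (⌈A⌉ - 1) :=
          Int.toNat_of_nonneg (le_of_lt h)
        have h3 : ((((⌊B⌋ + 1) + 1 - (⌈A⌉ - 1)).toNat : ℤ) : ℝ) = ((⌊B⌋:ℝ) + 2 - (⌈A⌉:ℝ) + 1) := by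
          rw [heq]; push_cast; ring
        have h4 : ((⌊B⌋:ℝ)) ≤ B := Int.floor_le B
        have h5 : A ≤ ((⌈A⌉:ℝ)) := Int.le_ceil A
        calc ((((⌊B⌋ + 1) + 1 - (⌈A⌉ - 1)).toNat : ℕ) : ℝ)
            = ((((⌊B⌋ + 1) + 1 - (⌈A⌉ - 1)).toNat : ℤ) : ℝ) := by push_cast; ring
          _ = (⌊B⌋:ℝ) + 2 - (⌈A⌉:ℝ) + 1 := h3
          _ ≤ B - A + 3 := by linarith
    calc (S.ncard : ℝ) ≤ ((Finset.Icc (⌈A⌉ - 1) (⌊B⌋ + 1)).card : ℝ) := by exact_mod_cast hcard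
      _ ≤ B - A + 3 := h2
  -- Lower bound
  have hkey : ∀ m : ℤ, A < (m:ℝ) → (m:ℝ) < B →
      (∃ p ∈ S, p.2 - p.1 = m) ∨ m ∈ E := by
    intro m hmA hmB
    have hg : ContinuousOn (fun t => Real.sin t * n - Real.cos t * n) (Set.Icc α β) :=
      ((Real.continuous_sin.mul continuous_const).sub
        (Real.continuous_cos.mul continuous_const)).continuousOn
    have hIvt := intermediate_value_Ioo hαβ hg
    have hmem : (m:ℝ) ∈ Set.Ioo (Real.sin α * n - Real.cos α * n)
        (Real.sin β * n - Real.cos β * n) := ⟨by rw [← hA]; exact hmA, by rw [← hB]; exact hmB⟩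
    obtain ⟨t₀, ht₀, hgt0⟩ := hIvt hmem
    have hgt : Real.sin t₀ * n - Real.cos t₀ * n = (m:ℝ) := hgt0
    obtain ⟨ht₀1, ht₀2⟩ := ht₀
    by_cases hint : ∃ a : ℤ, (a:ℝ) = Real.cos t₀ * n
    · right
      obtain ⟨a, ha⟩ := hint
      refine ⟨(a, a + m), ?_, by simp⟩
      obtain ⟨hc0, hc1, hs0, hs1⟩ := trig_bounds h0 hβ ht₀1 ht₀2
      have hb : ((a + m : ℤ):ℝ) = Real.sin t₀ * n := by
        push_cast
        rw [← ha] at hgt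
        linarith [hgt]
      refine ⟨?_, ?_, ?_⟩
      · have : (0:ℝ) ≤ (a:ℝ) := by rw [ha]; exact mul_nonneg hc0 (le_of_lt hN)
        exact_mod_cast this
      · have : (0:ℝ) ≤ ((a + m : ℤ):ℝ) := by rw [hb]; exact mul_nonneg hs0 (le_of_lt hN)
        exact_mod_cast this
      · have hreal : ((a:ℝ))^2 + ((a + m : ℤ):ℝ)^2 = ((n:ℝ))^2 := by
          rw [ha, hb]
          linear_combination ((n:ℝ))^2 * (Real.sin_sq_add_cos_sq t₀)
        exact_mod_cast hreal
    · left
      set i : ℤ := ⌊Real.cos t₀ * n⌋ with hi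
      set j : ℤ := m + i with hj
      have hi1 : (i:ℝ) < Real.cos t₀ * n :=
        lt_of_le_of_ne (Int.floor_le _) (fun h => hint ⟨i, h⟩)
      have hi2 : Real.cos t₀ * n < (i:ℝ) + 1 := Int.lt_floor_add_one _
      have hsin : Real.sin t₀ * n = (m:ℝ) + Real.cos t₀ * n := by linarith [hgt]
      refine ⟨(i, j), ?_, by rw [hj]; ring⟩
      rw [hS, mem_approx_iff hn]
      refine ⟨t₀, ht₀1, ht₀2, hi1, hi2, ?_, ?_⟩
      · rw [hj]; push_cast; rw [hsin]; linarith
      · rw [hj]; push_cast; rw [hsin]; linarith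
  set T2 : Finset ℤ := Finset.Icc (⌊A⌋ + 1) (⌈B⌉ - 1) with hT2
  set G : Finset ℤ := T2.filter (fun m => m ∉ E) with hG
  have hGsub : ∀ m ∈ G, m ∈ (fun ij : ℤ × ℤ => ij.2 - ij.1) '' S := by
    intro m hm
    rw [hG, Finset.mem_filter] at hm
    obtain ⟨hmT, hmE⟩ := hm
    rw [hT2, Finset.mem_Icc] at hmT
    have hmA : A < (m:ℝ) := by
      have h1 : (((⌊A⌋ + 1 : ℤ)):ℝ) ≤ (m:ℝ) := by exact_mod_cast hmT.1
      push_cast at h1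
      linarith [Int.lt_floor_add_one A]
    have hmB : (m:ℝ) < B := by
      have h1 : (m:ℝ) ≤ ((⌈B⌉ - 1 : ℤ):ℝ) := by exact_mod_cast hmT.2
      push_cast at h1
      linarith [Int.ceil_lt_add_one B]
    rcases hkey m hmA hmB with ⟨p, hp, hpm⟩ | hmE'
    · exact ⟨p, hp, hpm⟩
    · exact absurd hmE' hmE
  have hlower : B - A - 1 - (CZ.ncard : ℝ) ≤ (S.ncard : ℝ) := by
    have hG_le : G.card ≤ S.ncard := by
      have h1 : (↑G : Set ℤ) ⊆ (fun ij : ℤ × ℤ => ij.2 - ij.1) '' S := fun m hm => hGsub m hm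
      calc G.card = (↑G : Set ℤ).ncard := (Set.ncard_coe_finset G).symm
        _ ≤ ((fun ij : ℤ × ℤ => ij.2 - ij.1) '' S).ncard :=
            Set.ncard_le_ncard h1 (hfin.image _)
        _ ≤ S.ncard := Set.ncard_image_le hfin
    have hfilterE : (T2.filter (fun m => m ∈ E)).card ≤ CZ.ncard := by
      calc (T2.filter (fun m => m ∈ E)).card
          = (↑(T2.filter (fun m => m ∈ E)) : Set ℤ).ncard := (Set.ncard_coe_finset _).symm
        _ ≤ E.ncard := by
            apply Set.ncard_le_ncard ?_ hEfin
            intro m hm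
            simp only [Finset.coe_filter, Set.mem_setOf_eq] at hm
            exact hm.2
        _ ≤ CZ.ncard := Set.ncard_image_le hCZfin
    have hsplit : G.card + (T2.filter (fun m => m ∈ E)).card = T2.card := by
      rw [hG]
      rw [add_comm]
      exact Finset.card_filter_add_card_filter_not (fun m => m ∈ E)
    have hT2card : (B - A - 1 : ℝ) ≤ (T2.card : ℝ) := by
      rw [hT2, Int.card_Icc]
      have h1 : ((⌈B⌉ - 1) + 1 - (⌊A⌋ + 1) : ℤ) ≤ ((((⌈B⌉ - 1) + 1 - (⌊A⌋ + 1)).toNat : ℤ)) :=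
        Int.self_le_toNat _
      have h2 : ((⌈B⌉:ℝ)) ≥ B := Int.le_ceil B
      have h3 : ((⌊A⌋:ℝ)) ≤ A := Int.floor_le A
      have h4 : ((((⌈B⌉ - 1) + 1 - (⌊A⌋ + 1)).toNat : ℕ) : ℝ) ≥ (⌈B⌉:ℝ) - (⌊A⌋:ℝ) - 1 := by
        have := (@Int.cast_le ℝ _ _ _).mpr h1
        push_cast at this ⊢
        linarith
      linarith
    have hcast : (G.card : ℝ) ≥ (T2.card : ℝ) - (CZ.ncard : ℝ) := by
      have h1 : (G.card : ℝ) + ((T2.filter (fun m => m ∈ E)).card : ℝ) = (T2.card : ℝ) := by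
        exact_mod_cast hsplit
      have h2 : ((T2.filter (fun m => m ∈ E)).card : ℝ) ≤ (CZ.ncard : ℝ) := by
        exact_mod_cast hfilterE
      linarith
    have h3 : (G.card : ℝ) ≤ (S.ncard : ℝ) := by exact_mod_cast hG_le
    linarith
  rw [htarget]
  rw [abs_le]
  constructor
  · linarith
  · linarith
end geom

lemma CZ_card_le (n : ℕ) :
    {ab : ℤ × ℤ | 0 ≤ ab.1 ∧ 0 ≤ ab.2 ∧ ab.1^2 + ab.2^2 = (n:ℤ)^2}.ncard
      ≤ ((Finset.range (n+1) ×ˢ Finset.range (n+1)).filter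
          (fun ab => ab.1^2 + ab.2^2 = n^2)).card := by
  classical
  rw [← Set.ncard_coe_finset]
  apply Set.ncard_le_ncard_of_injOn (fun ab : ℤ × ℤ => (ab.1.toNat, ab.2.toNat))
  · rintro ⟨a, b⟩ ⟨ha, hb, hab⟩
    have hta : (a.toNat : ℤ) = a := Int.toNat_of_nonneg ha
    have htb : (b.toNat : ℤ) = b := Int.toNat_of_nonneg hb
    have heq : (a.toNat)^2 + (b.toNat)^2 = n^2 := by
      have h2 : ((a.toNat)^2 + (b.toNat)^2 : ℤ) = ((n:ℤ))^2 := by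
        rw [show ((a.toNat)^2 + (b.toNat)^2 : ℤ) = (a.toNat : ℤ)^2 + (b.toNat : ℤ)^2 by push_cast; ring,
          hta, htb]; exact hab
      exact_mod_cast h2
    have han : a ≤ (n:ℤ) := by nlinarith
    have hbn : b ≤ (n:ℤ) := by nlinarith
    simp only [Finset.mem_coe, Finset.mem_filter, Finset.mem_product, Finset.mem_range]
    exact ⟨⟨by omega, by omega⟩, heq⟩
  · rintro ⟨a, b⟩ ⟨ha, hb, -⟩ ⟨c, d⟩ ⟨hc, hd, -⟩ heq
    simp only [Prod.mk.injEq] at heq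
    dsimp only at ha hb hc hd
    have h1 : a = c := by omega
    have h2 : b = d := by omega
    simp [h1, h2]


theorem count_arc_boxes (ε α β : ℝ) (hε : 0 < ε) (h0 : 0 ≤ α) (hαβ : α ≤ β)
    (hβ : β ≤ Real.pi / 2) :
    ∃ K : ℝ, ∀ n : ℕ, 1 ≤ n →
      |((approx n (arc α β)).ncard : ℝ)
        - ((Real.sin β - Real.cos β) - (Real.sin α - Real.cos α)) * n| ≤ K * (n : ℝ) ^ ε := by
  obtain ⟨K₁, hK₁1, hK₁⟩ := card_divisors_le_rpow (ε/3) (by linarith)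
  refine ⟨5 + K₁^3, ?_⟩
  intro n hn
  have hn0 : n ≠ 0 := by omega
  have hnpos : 0 < n := by omega
  have hNpos : (0:ℝ) < (n:ℝ) := by exact_mod_cast hnpos
  have hgeo := approx_card_est hnpos h0 hαβ hβ
  have hchain : (({ab : ℤ × ℤ | 0 ≤ ab.1 ∧ 0 ≤ ab.2 ∧ ab.1^2 + ab.2^2 = (n:ℤ)^2}.ncard : ℝ))
      ≤ 2 + ((n.divisors.card : ℝ))^3 := by
    have h1 := CZ_card_le n
    have h2 := circle_lattice_le n hn0
    have h3 : {ab : ℤ × ℤ | 0 ≤ ab.1 ∧ 0 ≤ ab.2 ∧ ab.1^2 + ab.2^2 = (n:ℤ)^2}.ncard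
        ≤ 2 + n.divisors.card ^ 3 := le_trans h1 h2
    calc (({ab : ℤ × ℤ | 0 ≤ ab.1 ∧ 0 ≤ ab.2 ∧ ab.1^2 + ab.2^2 = (n:ℤ)^2}.ncard : ℝ))
        ≤ ((2 + n.divisors.card ^ 3 : ℕ) : ℝ) := by exact_mod_cast h3
      _ = 2 + ((n.divisors.card : ℝ))^3 := by push_cast; ring
  have hdiv : ((n.divisors.card : ℝ))^3 ≤ K₁^3 * (n:ℝ) ^ ε := by
    have h1 : ((n.divisors.card : ℝ)) ≤ K₁ * (n:ℝ) ^ (ε/3) := hK₁ n hn0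
    have h2 : ((n.divisors.card : ℝ))^3 ≤ (K₁ * (n:ℝ) ^ (ε/3))^3 :=
      pow_le_pow_left₀ (by positivity) h1 3
    have h3 : (K₁ * (n:ℝ) ^ (ε/3))^3 = K₁^3 * ((n:ℝ) ^ (ε/3))^3 := by ring
    have h4 : ((n:ℝ) ^ (ε/3))^3 = (n:ℝ) ^ ε := by
      rw [← Real.rpow_natCast ((n:ℝ) ^ (ε/3)) 3, ← Real.rpow_mul (le_of_lt hNpos)]
      norm_num
    rw [h3, h4] at h2
    exact h2
  have hne : (1:ℝ) ≤ (n:ℝ) ^ ε := by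
    have h1 : ((n:ℝ)) ^ (0:ℝ) ≤ (n:ℝ) ^ ε :=
      Real.rpow_le_rpow_of_exponent_le (by exact_mod_cast hn) (le_of_lt hε)
    rwa [Real.rpow_zero] at h1
  have hfinal : (5 + K₁^3) * ((n:ℝ) ^ ε) = 5 * ((n:ℝ) ^ ε) + K₁^3 * ((n:ℝ) ^ ε) := by ring
  linarith [hgeo, hchain, hdiv, hne, hfinal]
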